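/- Union representation of the market extension: AV@R^mar_α(X) = ⋃_{Y ∈ C_T} AV@R^reg_α(X + Y), where C_T = −Σ_{t=0}^T L^0_d(K_t) is the cone of freely available payoffs, and this union is a convex set. -/

import Mathlib

open MeasureTheory Pointwise

noncomputable section

/-- The set-valued regulator average value at risk. -/
def AVaRreg {Ω : Type*} [MeasureSpace Ω] {d : ℕ}
    (α : Fin d → ℝ) (M : Submodule ℝ (Fin d → ℝ)) (X : Ω → Fin d → ℝ) :
    Set (Fin d → ℝ) :=
  {u | ∃ Z : Ω → Fin d → ℝ, ∃ z : Fin d → ℝ,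
      (∀ i, Integrable (fun ω => Z ω i)) ∧
      (∀ᵐ ω ∂(volume : Measure Ω), ∀ i, 0 ≤ Z ω i) ∧
      (∀ᵐ ω ∂(volume : Measure Ω), ∀ i, 0 ≤ X ω i + Z ω i - z i) ∧
      u = fun i => (α i)⁻¹ * (∫ ω, Z ω i) - z i} ∩ (M : Set (Fin d → ℝ))

/-- The ordering cone `M₊ = M ∩ ℝ^d₊` of the space of eligible portfolios. -/
def Mplus {d : ℕ} (M : Submodule ℝ (Fin d → ℝ)) : Set (Fin d → ℝ) :=
  {k | k ∈ M ∧ ∀ i, 0 ≤ k i}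

/-- The market extension of the set-valued average value at risk, where
`C` is the cone of freely available payoffs. -/
def AVaRmar {Ω : Type*} [MeasureSpace Ω] {d : ℕ}
    (α : Fin d → ℝ) (M : Submodule ℝ (Fin d → ℝ)) (C : Set (Ω → Fin d → ℝ))
    (X : Ω → Fin d → ℝ) : Set (Fin d → ℝ) :=
  {u | ∃ Z : Ω → Fin d → ℝ, ∃ z : Fin d → ℝ,
      (∀ i, Integrable (fun ω => Z ω i)) ∧
      (∀ᵐ ω ∂(volume : Measure Ω), ∀ i, 0 ≤ Z ω i) ∧
      (fun ω => X ω + Z ω - z) ∈ -C ∧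
      u = fun i => (α i)⁻¹ * (∫ ω, Z ω i) - z i} ∩ (M : Set (Fin d → ℝ))

theorem avar_mar_union_representation {Ω : Type*} [MeasureSpace Ω]
    [IsProbabilityMeasure (volume : Measure Ω)]
    {d : ℕ} (hd : 1 ≤ d) (α : Fin d → ℝ) (hα : ∀ i, α i ∈ Set.Ioc (0 : ℝ) 1)
    (M : Submodule ℝ (Fin d → ℝ)) (hM : ∃ k ∈ Mplus M, k ≠ 0)
    (C : Set (Ω → Fin d → ℝ))
    (hCadd : ∀ Y₁ ∈ C, ∀ Y₂ ∈ C, Y₁ + Y₂ ∈ C)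
    (hCsmul : ∀ Y ∈ C, ∀ c : ℝ, 0 ≤ c → c • Y ∈ C)
    (hCmin : ∀ Y ∈ C, ∀ U : Ω → Fin d → ℝ,
      (∀ᵐ ω ∂(volume : Measure Ω), ∀ i, 0 ≤ U ω i) → Y - U ∈ C)
    (X : Ω → Fin d → ℝ) (hX : Measurable X) :
    (AVaRmar α M C X = ⋃ Y ∈ C, AVaRreg α M (fun ω => X ω + Y ω)) ∧
    Convex ℝ (⋃ Y ∈ C, AVaRreg α M (fun ω => X ω + Y ω)) := by
  have key : AVaRmar α M C X = ⋃ Y ∈ C, AVaRreg α M (fun ω => X ω + Y ω) := by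
    ext u
    simp only [Set.mem_iUnion]
    constructor
    · rintro ⟨⟨Z, z, hint, hpos, hmem, hu⟩, huM⟩
      refine ⟨fun ω => -(X ω + Z ω - z), ?_, ⟨Z, z, hint, hpos, ?_, hu⟩, huM⟩
      · have := Set.mem_neg.mp hmem
        convert this using 1
        rfl
      · filter_upwards with ω i
        simp only [Pi.neg_apply, Pi.add_apply, Pi.sub_apply]
        linarith
    · rintro ⟨Y, hY, ⟨Z, z, hint, hpos, hge, hu⟩, huM⟩
      refine ⟨⟨Z, z, hint, hpos, ?_, hu⟩, huM⟩
      have hU : ∀ᵐ ω ∂(volume : Measure Ω), ∀ i,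
          0 ≤ (fun ω => X ω + Y ω + Z ω - z) ω i := by
        filter_upwards [hge] with ω h i
        have := h i
        simp only [Pi.add_apply, Pi.sub_apply] at this ⊢
        linarith
      have hmem := hCmin Y hY _ hU
      rw [Set.mem_neg]
      convert hmem using 1
      funext ω
      funext i
      simp only [Pi.neg_apply, Pi.add_apply, Pi.sub_apply]
      ring
  have hconv : Convex ℝ (AVaRmar α M C X) := by
    rintro u ⟨⟨Z₁, z₁, hint₁, hpos₁, hmem₁, hu₁⟩, huM⟩
      v ⟨⟨Z₂, z₂, hint₂, hpos₂, hmem₂, hv₂⟩, hvM⟩ a b ha hb hab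
    refine ⟨⟨fun ω => a • Z₁ ω + b • Z₂ ω, a • z₁ + b • z₂, ?_, ?_, ?_, ?_⟩,
      M.add_mem (M.smul_mem a huM) (M.smul_mem b hvM)⟩
    · intro i
      have : (fun ω => (a • Z₁ ω + b • Z₂ ω) i)
          = fun ω => a * Z₁ ω i + b * Z₂ ω i := by
        funext ω; simp
      rw [this]
      exact ((hint₁ i).const_mul a).add ((hint₂ i).const_mul b)
    · filter_upwards [hpos₁, hpos₂] with ω h₁ h₂ i
      simp only [Pi.add_apply, Pi.smul_apply, smul_eq_mul]
      exact add_nonneg (mul_nonneg ha (h₁ i)) (mul_nonneg hb (h₂ i))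
    · rw [Set.mem_neg]
      have h₁ := hCsmul _ (Set.mem_neg.mp hmem₁) a ha
      have h₂ := hCsmul _ (Set.mem_neg.mp hmem₂) b hb
      have := hCadd _ h₁ _ h₂
      convert this using 1
      funext ω
      funext i
      simp only [Pi.neg_apply, Pi.add_apply, Pi.sub_apply, Pi.smul_apply, smul_eq_mul]
      linear_combination (X ω i) * hab
    · subst hu₁ hv₂
      funext i
      simp only [Pi.add_apply, Pi.smul_apply, smul_eq_mul]
      rw [integral_add ((hint₁ i).const_mul a) ((hint₂ i).const_mul b),
        integral_const_mul, integral_const_mul]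
      ring
  exact ⟨key, key ▸ hconv⟩
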